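/- Let o_r = o/(π^r) with o of characteristic 2 and residue field F_q, and write each v ∈ o_r uniquely as v = Σ_{i<r} (v)_i π^i with (v)_i ∈ F_q. Fix a nontrivial additive character 𝛙 of F_q and its unique ξ ∈ F_q^× with Ker(𝛙) = {ξx² + x}. Suppose b, c ∈ o_r^× and 1 ≤ 2m+1 ≤ r satisfy ξ·b² ≠ c² mod (π^{2m+1}). Then there exists z ∈ o_r such that (bz)_m + (c²z²)_{2m} ∉ Ker(𝛙). -/

import Mathlib

set_option maxHeartbeats 1000000
set_option synthInstance.maxHeartbeats 200000


/-- The finite ring `o_r = F[[t]]/(t^r)` for a (finite) field `F` of characteristic 2,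
realizing the complete discrete valuation ring `o = F[[t]]` with uniformizer `t`. -/
abbrev OFq (F : Type*) [Field F] (r : ℕ) : Type _ :=
  PowerSeries F ⧸ Ideal.span {(PowerSeries.X : PowerSeries F) ^ r}

/-- The `i`-th coefficient `(v)_i ∈ F` of the canonical expansion `v = Σ_{i} (v)_i π^i`
of `v ∈ o_r`.  (For `i < r` this does not depend on the chosen representative.) -/
noncomputable def coeffQ (F : Type*) [Field F] (r i : ℕ) (v : OFq F r) : F :=
  PowerSeries.coeff i
    (Function.surjInv (f := Ideal.Quotient.mk (Ideal.span {(PowerSeries.X : PowerSeries F) ^ r}))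
      Ideal.Quotient.mk_surjective v)

/-- The image of the uniformizer `π` in `o_r`. -/
noncomputable def Xbar (F : Type*) [Field F] (r : ℕ) : OFq F r :=
  Ideal.Quotient.mk (Ideal.span {(PowerSeries.X : PowerSeries F) ^ r}) PowerSeries.X

lemma coeffQ_mk {F : Type*} [Field F] {r i : ℕ} (hi : i < r) (p : PowerSeries F) :
    coeffQ F r i (Ideal.Quotient.mk (Ideal.span {(PowerSeries.X : PowerSeries F) ^ r}) p)
      = PowerSeries.coeff i p := by
  unfold coeffQ
  have h1 : Ideal.Quotient.mk (Ideal.span {(PowerSeries.X : PowerSeries F) ^ r})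
      (Function.surjInv (f := Ideal.Quotient.mk
          (Ideal.span {(PowerSeries.X : PowerSeries F) ^ r}))
        Ideal.Quotient.mk_surjective
        (Ideal.Quotient.mk (Ideal.span {(PowerSeries.X : PowerSeries F) ^ r}) p))
      = Ideal.Quotient.mk (Ideal.span {(PowerSeries.X : PowerSeries F) ^ r}) p :=
    Function.surjInv_eq _ _
  have h2 := Ideal.Quotient.eq.mp h1
  rw [Ideal.mem_span_singleton] at h2
  have h3 := (PowerSeries.X_pow_dvd_iff.mp h2) i hi
  rw [map_sub, sub_eq_zero] at h3
  exact h3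

/-- if `ξ·b² ≠ c² mod π^{2m+1}` for units `b, c` of `o_r` (`1 ≤ 2m+1 ≤ r`),
where `ξ` is the unique nonzero element with `Ker 𝛙 = {ξx² + x}`, then there is `z ∈ o_r`
with `(bz)_m + (c²z²)_{2m} ∉ Ker 𝛙`. -/
theorem stmt_8 {F : Type*} [Field F] [Fintype F] [CharP F 2]
    (ψ : AddChar F ℂ) (hψ : ∃ x : F, ψ x ≠ 1)
    (ξ : F) (hξ : ξ ≠ 0)
    (hker : {x : F | ψ x = 1} = Set.range (fun x : F => ξ * x ^ 2 + x))
    (r m : ℕ) (h1 : 1 ≤ 2 * m + 1) (h2 : 2 * m + 1 ≤ r)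
    (b c : (OFq F r)ˣ)
    (hbc :
      (Ideal.Quotient.mk (Ideal.span {(PowerSeries.X : PowerSeries F) ^ r})
            (PowerSeries.C ξ)) * (b : OFq F r) ^ 2 - (c : OFq F r) ^ 2 ∉
        Ideal.span {Xbar F r ^ (2 * m + 1)}) :
    ∃ z : OFq F r,
      ψ (coeffQ F r m ((b : OFq F r) * z) +
          coeffQ F r (2 * m) ((c : OFq F r) ^ 2 * z ^ 2)) ≠ 1 := by
  classical
  by_contra hcon
  push_neg at hcon
  set mk' := Ideal.Quotient.mk (Ideal.span {(PowerSeries.X : PowerSeries F) ^ r}) with hmk'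
  have hF2 : (2 : F) = 0 := CharTwo.two_eq_zero
  have hm : m < r := by omega
  have h2m : 2 * m < r := by omega
  -- ψ(k*u)=1 for all u implies k = 0
  have key : ∀ k : F, (∀ u : F, ψ (k * u) = 1) → k = 0 := by
    intro k hk
    by_contra hk0
    obtain ⟨x, hx⟩ := hψ
    have := hk (x / k)
    rw [mul_div_cancel₀ x hk0] at this
    exact hx this
  -- lift of b * c⁻¹
  obtain ⟨A, hA⟩ := Ideal.Quotient.mk_surjective
    ((b : OFq F r) * ((c⁻¹ : (OFq F r)ˣ) : OFq F r))
  -- specialization of the hypothesis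
  have spec : ∀ W : PowerSeries F,
      ψ (PowerSeries.coeff m (A * W) + PowerSeries.coeff (2 * m) (W ^ 2)) = 1 := by
    intro W
    have hz := hcon (((c⁻¹ : (OFq F r)ˣ) : OFq F r) * mk' W)
    have e1 : (b : OFq F r) * (((c⁻¹ : (OFq F r)ˣ) : OFq F r) * mk' W) = mk' (A * W) := by
      rw [map_mul, hA]; ring
    have e2 : (c : OFq F r) ^ 2 * (((c⁻¹ : (OFq F r)ˣ) : OFq F r) * mk' W) ^ 2
        = mk' (W ^ 2) := by
      rw [map_pow, ← mul_pow, ← mul_assoc]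
      norm_cast
      rw [mul_inv_cancel, Units.val_one, one_mul]
    rw [e1, e2, coeffQ_mk hm, coeffQ_mk h2m] at hz
    exact hz
  -- vanishing of intermediate coefficients of A
  have ha : ∀ i : ℕ, 1 ≤ i → i ≤ m → PowerSeries.coeff i A = 0 := by
    intro i hi1 him
    apply key
    intro u
    have hs := spec (PowerSeries.C u * PowerSeries.X ^ (m - i))
    have e1 : A * (PowerSeries.C u * PowerSeries.X ^ (m - i))
        = (PowerSeries.C u * A) * PowerSeries.X ^ (m - i) := by ring
    have e2 : (PowerSeries.C u * PowerSeries.X ^ (m - i)) ^ 2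
        = PowerSeries.C (u ^ 2) * PowerSeries.X ^ ((m - i) * 2) := by
      rw [mul_pow, ← map_pow, ← pow_mul]
    rw [e1, e2, PowerSeries.coeff_mul_X_pow', if_pos (by omega : m - i ≤ m),
      show m - (m - i) = i by omega, PowerSeries.coeff_C_mul,
      PowerSeries.coeff_C_mul, PowerSeries.coeff_X_pow,
      if_neg (by omega : ¬ 2 * m = (m - i) * 2)] at hs
    rw [mul_comm]
    simpa using hs
  -- the quadratic condition on a0
  set a0 : F := PowerSeries.coeff 0 A with ha0def
  have ha0 : ∀ u : F, ψ (a0 * u + u ^ 2) = 1 := by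
    intro u
    have hs := spec (PowerSeries.C u * PowerSeries.X ^ m)
    have e1 : A * (PowerSeries.C u * PowerSeries.X ^ m)
        = (PowerSeries.C u * A) * PowerSeries.X ^ m := by ring
    have e2 : (PowerSeries.C u * PowerSeries.X ^ m) ^ 2
        = PowerSeries.C (u ^ 2) * PowerSeries.X ^ (m * 2) := by
      rw [mul_pow, ← map_pow, ← pow_mul]
    rw [e1, e2, PowerSeries.coeff_mul_X_pow', if_pos (le_refl m),
      show m - m = 0 by omega, PowerSeries.coeff_C_mul, PowerSeries.coeff_C_mul,
      PowerSeries.coeff_X_pow, if_pos (by omega : 2 * m = m * 2), mul_one] at hs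
    rw [mul_comm a0 u]
    exact hs
  -- square root of ξ⁻¹
  have sqsurj : ∀ y : F, ∃ x : F, x ^ 2 = y := by
    have hinj : Function.Injective (fun x : F => x ^ 2) := by
      intro x y hxy
      simp only at hxy
      have hx0 : (x + y) ^ 2 = 0 := by
        rw [CharTwo.add_sq, hxy, ← two_mul, hF2, zero_mul]
      have hz0 := pow_eq_zero_iff (n := 2) (by norm_num) |>.mp hx0
      linear_combination hz0 - y * hF2
    exact fun y => (Finite.injective_iff_surjective.mp hinj) y
  obtain ⟨μ, hμ⟩ := sqsurj ξ⁻¹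
  have hξψ : ∀ x : F, ψ (ξ * x ^ 2 + x) = 1 := by
    intro x
    have : ξ * x ^ 2 + x ∈ {x : F | ψ x = 1} := by
      rw [hker]; exact ⟨x, rfl⟩
    exact this
  have hlin : ∀ u : F, ψ ((a0 + μ) * u) = 1 := by
    intro u
    have e : (a0 * u + u ^ 2) + (ξ * (μ * u) ^ 2 + μ * u) = (a0 + μ) * u := by
      have eμ : ξ * μ ^ 2 = 1 := by rw [hμ, mul_inv_cancel₀ hξ]
      linear_combination u ^ 2 * eμ + u ^ 2 * hF2
    rw [← e, AddChar.map_add_eq_mul, ha0 u, hξψ (μ * u), one_mul]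
  have ha0μ : a0 = μ := by
    have h0 := key _ hlin
    linear_combination h0 - μ * hF2
  have hξa0 : ξ * a0 ^ 2 = 1 := by rw [ha0μ, hμ, mul_inv_cancel₀ hξ]
  -- A = C a0 + X^(m+1) * T
  have hdvd : PowerSeries.X ^ (m + 1) ∣ (A - PowerSeries.C a0) := by
    rw [PowerSeries.X_pow_dvd_iff]
    intro j hj
    simp only [map_sub, PowerSeries.coeff_C]
    rcases Nat.eq_zero_or_pos j with h0 | hpos
    · subst h0; simp [ha0def]
    · rw [if_neg (by omega), sub_zero]
      exact ha j hpos (by omega)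
  obtain ⟨T, hT⟩ := hdvd
  have h2PS : (2 : PowerSeries F) = 0 := by
    rw [← map_ofNat (PowerSeries.C (R := F)) 2, hF2, map_zero]
  have hC1 : PowerSeries.C ξ * (PowerSeries.C a0) ^ 2 = 1 := by
    rw [← map_pow, ← map_mul, hξa0, map_one]
  have hAeq : A = PowerSeries.C a0 + PowerSeries.X ^ (m + 1) * T := by
    rw [← hT]; ring
  have hfact : PowerSeries.C ξ * A ^ 2 - 1
      = PowerSeries.X ^ (2 * m + 1) * (PowerSeries.X * (PowerSeries.C ξ * T ^ 2)) := by
    rw [hAeq]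
    linear_combination hC1 + (PowerSeries.C ξ * PowerSeries.C a0
      * PowerSeries.X ^ (m + 1) * T) * h2PS
  -- conclude membership, contradicting hbc
  apply hbc
  have hb : (b : OFq F r) = mk' A * (c : OFq F r) := by
    rw [hA, mul_assoc]
    norm_cast
    rw [inv_mul_cancel, mul_one]
  have hv : mk' (PowerSeries.C ξ) * (b : OFq F r) ^ 2 - (c : OFq F r) ^ 2
      = ((c : OFq F r) ^ 2 * mk' (PowerSeries.X * (PowerSeries.C ξ * T ^ 2)))
        * Xbar F r ^ (2 * m + 1) := by
    have : mk' (PowerSeries.C ξ) * (mk' A) ^ 2 - 1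
        = mk' (PowerSeries.X ^ (2 * m + 1)) * mk' (PowerSeries.X
            * (PowerSeries.C ξ * T ^ 2)) := by
      rw [← map_mul, ← hfact, RingHom.map_sub, map_mul, map_pow, map_one]
    have hXb : Xbar F r ^ (2 * m + 1) = mk' (PowerSeries.X ^ (2 * m + 1)) := by
      rw [Xbar, ← map_pow]
    rw [hb, hXb]
    calc mk' (PowerSeries.C ξ) * (mk' A * (c : OFq F r)) ^ 2 - (c : OFq F r) ^ 2
        = (c : OFq F r) ^ 2 * (mk' (PowerSeries.C ξ) * (mk' A) ^ 2 - 1) := by ring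
      _ = _ := by rw [this]; ring
  rw [hv]
  exact Ideal.mem_span_singleton'.mpr ⟨_, rfl⟩
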